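/- arXiv:2310.11824 — 2 statements merged into one kernel-verified Lean document; each statement's English description precedes it below -/
import Mathlib

section
/- For any g ≥ 1, the set of symplectic 2g×2g integer matrices (A B; C D) (in g×g block form) such that all diagonal entries of CᵀA and of DᵀB are even, forms a subgroup of the symplectic group Sp_{2g}(ℤ). -/
open Matrix

/-- The standard symplectic form `J = (0 I; -I 0)`. -/
def Jmat (g : ℕ) : Matrix (Fin g ⊕ Fin g) (Fin g ⊕ Fin g) ℤ :=
  Matrix.fromBlocks 0 1 (-1) 0

/-- `N` is symplectic: `NᵀJN = J`. -/
def IsSymplecticInt (g : ℕ) (N : Matrix (Fin g ⊕ Fin g) (Fin g ⊕ Fin g) ℤ) : Prop :=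
  Nᵀ * Jmat g * N = Jmat g

/-- The parity condition: writing `N = (A B; C D)` in `g×g` blocks, all diagonal
entries of `CᵀA` and of `DᵀB` are even. -/
def EvenDiagCond (g : ℕ) (N : Matrix (Fin g ⊕ Fin g) (Fin g ⊕ Fin g) ℤ) : Prop :=
  ∀ i : Fin g,
    Even (((N.toBlocks₂₁)ᵀ * N.toBlocks₁₁) i i) ∧
    Even (((N.toBlocks₂₂)ᵀ * N.toBlocks₁₂) i i)

namespace SpqAux

variable {g : ℕ}

/-- The quadratic form `q(x,y) = ∑ xᵢ yᵢ` over `ℤ/2`. -/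
def qf (g : ℕ) (v : Fin g ⊕ Fin g → ZMod 2) : ZMod 2 :=
  ∑ i : Fin g, v (Sum.inl i) * v (Sum.inr i)

lemma qf_elim (x y : Fin g → ZMod 2) : qf g (Sum.elim x y) = x ⬝ᵥ y := rfl

/-- mod-2 reduction of an integer matrix. -/
def red {m n : Type*} (N : Matrix m n ℤ) : Matrix m n (ZMod 2) :=
  N.map ⇑(Int.castRingHom (ZMod 2))

lemma red_mul {m n o : Type*} [Fintype n] (M : Matrix m n ℤ) (N : Matrix n o ℤ) :
    red (M * N) = red M * red N := Matrix.map_mul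

lemma red_one {n : Type*} [DecidableEq n] : red (1 : Matrix n n ℤ) = 1 :=
  Matrix.map_one _ (by simp) (by simp)

lemma red_sub {m n : Type*} (X Y : Matrix m n ℤ) : red (X - Y) = red X - red Y := by
  ext i j; simp [red, Matrix.sub_apply]

/-- char-2: symmetric bilinear form reduces to the diagonal. -/
lemma symm_sum (S : Matrix (Fin g) (Fin g) (ZMod 2)) (hS : Sᵀ = S) (x : Fin g → ZMod 2) :
    x ⬝ᵥ (S *ᵥ x) = ∑ i, S i i * x i := by
  have hsq : ∀ a : ZMod 2, a * a = a := by decide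
  have expand : x ⬝ᵥ (S *ᵥ x)
      = ∑ p ∈ Finset.univ ×ˢ Finset.univ, x p.1 * S p.1 p.2 * x p.2 := by
    rw [Finset.sum_product]
    simp [dotProduct, mulVec, Finset.mul_sum, mul_assoc, mul_left_comm]
  rw [expand, ← Finset.diag_union_offDiag,
    Finset.sum_union (Finset.disjoint_diag_offDiag _)]
  have h1 : ∑ p ∈ Finset.univ.diag, x p.1 * S p.1 p.2 * x p.2 = ∑ i, S i i * x i := by
    rw [Finset.sum_diag]
    congr 1; ext i
    rw [mul_comm (x i) (S i i), mul_assoc, hsq]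
  have hS' : ∀ a b : Fin g, S a b = S b a := by
    intro a b
    calc S a b = Sᵀ b a := (transpose_apply S b a).symm
    _ = S b a := by rw [hS]
  have h2 : ∑ p ∈ (Finset.univ : Finset (Fin g)).offDiag, x p.1 * S p.1 p.2 * x p.2 = 0 := by
    refine Finset.sum_involution (fun p _ => (p.2, p.1)) ?_ ?_ ?_ ?_
    · intro p hp
      have e : x p.2 * S p.2 p.1 * x p.1 = x p.1 * S p.1 p.2 * x p.2 := by
        rw [hS' p.2 p.1]; ring
      show x p.1 * S p.1 p.2 * x p.2 + x p.2 * S p.2 p.1 * x p.1 = 0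
      rw [e]
      exact CharTwo.add_self_eq_zero _
    · intro p hp _
      simp only [Finset.mem_offDiag] at hp
      intro h
      exact hp.2.2 (congrArg Prod.fst h).symm
    · intro p hp
      simp only [Finset.mem_offDiag] at hp ⊢
      exact ⟨Finset.mem_univ _, Finset.mem_univ _, fun h => hp.2.2 (h.symm)⟩
    · intro p hp; rfl
  rw [h1, h2, add_zero]

/-- block relations coming from the symplectic condition, over ℤ. -/
lemma symp_blocks (N : Matrix (Fin g ⊕ Fin g) (Fin g ⊕ Fin g) ℤ)
    (hN : IsSymplecticInt g N) :
    (N.toBlocks₁₁)ᵀ * N.toBlocks₂₁ = (N.toBlocks₂₁)ᵀ * N.toBlocks₁₁ ∧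
    (N.toBlocks₁₂)ᵀ * N.toBlocks₂₂ = (N.toBlocks₂₂)ᵀ * N.toBlocks₁₂ ∧
    (N.toBlocks₁₁)ᵀ * N.toBlocks₂₂ - (N.toBlocks₂₁)ᵀ * N.toBlocks₁₂ = 1 := by
  set A := N.toBlocks₁₁; set B := N.toBlocks₁₂; set C := N.toBlocks₂₁; set D := N.toBlocks₂₂
  have hblock : N = fromBlocks A B C D := (fromBlocks_toBlocks N).symm
  unfold IsSymplecticInt Jmat at hN
  rw [hblock, fromBlocks_transpose, fromBlocks_multiply, fromBlocks_multiply] at hN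
  simp only [Matrix.mul_one, Matrix.mul_zero, Matrix.mul_neg,
    Matrix.zero_mul, Matrix.one_mul, Matrix.neg_mul,
    zero_add, add_zero] at hN
  rw [fromBlocks_inj] at hN
  obtain ⟨h11, h12, h21, h22⟩ := hN
  rw [neg_add_eq_zero] at h11 h22
  rw [neg_add_eq_sub] at h12
  exact ⟨h11.symm, h22.symm, h12⟩


lemma neg_mat_eq (M : Matrix (Fin g) (Fin g) (ZMod 2)) : -M = M := by
  ext i j; exact CharTwo.neg_eq _

/-- the mulVec helper: (M *ᵥ u) ⬝ᵥ (N *ᵥ w) = u ⬝ᵥ ((Mᵀ * N) *ᵥ w). -/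
lemma mulVec_dot (M N : Matrix (Fin g) (Fin g) (ZMod 2)) (u w : Fin g → ZMod 2) :
    (M *ᵥ u) ⬝ᵥ (N *ᵥ w) = u ⬝ᵥ ((Mᵀ * N) *ᵥ w) := by
  rw [← mulVec_mulVec, dotProduct_mulVec u, vecMul_transpose]

/-- Key identity over ZMod 2. -/
lemma key (A B C D : Matrix (Fin g) (Fin g) (ZMod 2))
    (h1 : Aᵀ * C = Cᵀ * A) (h2 : Bᵀ * D = Dᵀ * B) (h3 : Aᵀ * D + Cᵀ * B = 1)
    (x y : Fin g → ZMod 2) :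
    (A *ᵥ x + B *ᵥ y) ⬝ᵥ (C *ᵥ x + D *ᵥ y)
      = x ⬝ᵥ y + ∑ i, (Cᵀ * A) i i * x i + ∑ i, (Dᵀ * B) i i * y i := by
  have hsymm1 : (Cᵀ * A)ᵀ = Cᵀ * A := by
    rw [transpose_mul, transpose_transpose, h1]
  have hsymm2 : (Dᵀ * B)ᵀ = Dᵀ * B := by
    rw [transpose_mul, transpose_transpose, h2]
  have t1 : (A *ᵥ x) ⬝ᵥ (C *ᵥ x) = ∑ i, (Cᵀ * A) i i * x i := by
    rw [mulVec_dot, h1, symm_sum _ hsymm1]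
  have t4 : (B *ᵥ y) ⬝ᵥ (D *ᵥ y) = ∑ i, (Dᵀ * B) i i * y i := by
    rw [mulVec_dot, h2, symm_sum _ hsymm2]
  have t23 : (A *ᵥ x) ⬝ᵥ (D *ᵥ y) + (B *ᵥ y) ⬝ᵥ (C *ᵥ x) = x ⬝ᵥ y := by
    have e3 : (B *ᵥ y) ⬝ᵥ (C *ᵥ x) = x ⬝ᵥ ((Cᵀ * B) *ᵥ y) := by
      rw [dotProduct_comm, mulVec_dot]
    rw [mulVec_dot, e3, ← dotProduct_add, ← add_mulVec, h3, one_mulVec]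
  rw [dotProduct_add, add_dotProduct, add_dotProduct, t1, t4]
  linear_combination t23

/-- q transforms under a symplectic matrix by the diagonal linear terms. -/
lemma qf_mulVec (N : Matrix (Fin g ⊕ Fin g) (Fin g ⊕ Fin g) ℤ)
    (hN : IsSymplecticInt g N) (v : Fin g ⊕ Fin g → ZMod 2) :
    qf g (red N *ᵥ v)
      = qf g v + ∑ i, ((((N.toBlocks₂₁)ᵀ * N.toBlocks₁₁) i i : ℤ) : ZMod 2) * v (Sum.inl i)
          + ∑ i, ((((N.toBlocks₂₂)ᵀ * N.toBlocks₁₂) i i : ℤ) : ZMod 2) * v (Sum.inr i) := by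
  obtain ⟨e1, e2, e3⟩ := symp_blocks N hN
  set A := N.toBlocks₁₁; set B := N.toBlocks₁₂; set C := N.toBlocks₂₁; set D := N.toBlocks₂₂
  set A' := red A; set B' := red B; set C' := red C; set D' := red D
  have hredN : red N = fromBlocks A' B' C' D' := by
    rw [show N = fromBlocks A B C D from (fromBlocks_toBlocks N).symm]
    exact fromBlocks_map A B C D _
  have redT : ∀ M : Matrix (Fin g) (Fin g) ℤ, red Mᵀ = (red M)ᵀ := fun M =>
    Matrix.transpose_map
  have h1 : A'ᵀ * C' = C'ᵀ * A' := by
    rw [← redT, ← redT, ← red_mul, ← red_mul, e1]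
  have h2 : B'ᵀ * D' = D'ᵀ * B' := by
    rw [← redT, ← redT, ← red_mul, ← red_mul, e2]
  have h3 : A'ᵀ * D' + C'ᵀ * B' = 1 := by
    have h := congrArg red e3
    rw [red_sub, red_one, sub_eq_add_neg, neg_mat_eq] at h
    rw [← redT, ← redT, ← red_mul, ← red_mul]
    exact h
  have hv : v = Sum.elim (v ∘ Sum.inl) (v ∘ Sum.inr) := by
    ext (i | i) <;> rfl
  set x := v ∘ Sum.inl; set y := v ∘ Sum.inr
  have hmv : red N *ᵥ v = Sum.elim (A' *ᵥ x + B' *ᵥ y) (C' *ᵥ x + D' *ᵥ y) := by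
    rw [hredN, fromBlocks_mulVec]
  rw [hmv, qf_elim, key A' B' C' D' h1 h2 h3 x y]
  have diag1 : ∀ i, (C'ᵀ * A') i i = (((Cᵀ * A) i i : ℤ) : ZMod 2) := by
    intro i
    rw [← redT, ← red_mul]
    rfl
  have diag2 : ∀ i, (D'ᵀ * B') i i = (((Dᵀ * B) i i : ℤ) : ZMod 2) := by
    intro i
    rw [← redT, ← red_mul]
    rfl
  simp only [diag1, diag2]
  rw [show qf g v = x ⬝ᵥ y by rw [hv, qf_elim]]
  rfl

/-- Equivalence of the even-diagonal condition with preservation of `q`. -/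
lemma cond_iff (N : Matrix (Fin g ⊕ Fin g) (Fin g ⊕ Fin g) ℤ)
    (hN : IsSymplecticInt g N) :
    EvenDiagCond g N ↔ ∀ v, qf g (red N *ᵥ v) = qf g v := by
  constructor
  · intro h v
    rw [qf_mulVec N hN v]
    have z1 : ∀ i : Fin g, ((((N.toBlocks₂₁)ᵀ * N.toBlocks₁₁) i i : ℤ) : ZMod 2) = 0 := by
      intro i
      rw [ZMod.intCast_zmod_eq_zero_iff_dvd]
      exact_mod_cast (h i).1.two_dvd
    have z2 : ∀ i : Fin g, ((((N.toBlocks₂₂)ᵀ * N.toBlocks₁₂) i i : ℤ) : ZMod 2) = 0 := by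
      intro i
      rw [ZMod.intCast_zmod_eq_zero_iff_dvd]
      exact_mod_cast (h i).2.two_dvd
    simp [z1, z2]
  · intro h i
    constructor
    · have hv := h (Sum.elim (Pi.single i 1) 0)
      rw [qf_mulVec N hN] at hv
      have e0 : qf g (Sum.elim (Pi.single i (1 : ZMod 2)) 0) = 0 := by
        simp [qf]
      rw [e0] at hv
      simp only [Sum.elim_inl, Sum.elim_inr, Pi.zero_apply, mul_zero,
        Finset.sum_const_zero, add_zero, zero_add] at hv
      rw [Finset.sum_eq_single i (fun b _ hb => by simp [Pi.single_apply, hb])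
        (fun hmem => absurd (Finset.mem_univ i) hmem)] at hv
      simp only [Pi.single_apply, if_pos rfl, if_true, mul_one] at hv
      rw [even_iff_two_dvd]
      exact_mod_cast (ZMod.intCast_zmod_eq_zero_iff_dvd _ 2).mp hv
    · have hv := h (Sum.elim 0 (Pi.single i 1))
      rw [qf_mulVec N hN] at hv
      have e0 : qf g (Sum.elim (0 : Fin g → ZMod 2) (Pi.single i 1)) = 0 := by
        simp [qf]
      rw [e0] at hv
      simp only [Sum.elim_inl, Sum.elim_inr, Pi.zero_apply, mul_zero,
        Finset.sum_const_zero, add_zero, zero_add] at hv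
      rw [Finset.sum_eq_single i (fun b _ hb => by simp [Pi.single_apply, hb])
        (fun hmem => absurd (Finset.mem_univ i) hmem)] at hv
      simp only [Pi.single_apply, if_pos rfl, if_true, mul_one] at hv
      rw [even_iff_two_dvd]
      exact_mod_cast (ZMod.intCast_zmod_eq_zero_iff_dvd _ 2).mp hv

lemma symp_one : IsSymplecticInt g (1 : Matrix (Fin g ⊕ Fin g) (Fin g ⊕ Fin g) ℤ) := by
  unfold IsSymplecticInt
  rw [transpose_one, Matrix.one_mul, Matrix.mul_one]

lemma symp_mul (a b : Matrix (Fin g ⊕ Fin g) (Fin g ⊕ Fin g) ℤ)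
    (ha : IsSymplecticInt g a) (hb : IsSymplecticInt g b) :
    IsSymplecticInt g (a * b) := by
  unfold IsSymplecticInt at *
  calc (a * b)ᵀ * Jmat g * (a * b)
      = bᵀ * (aᵀ * Jmat g * a) * b := by
        rw [transpose_mul]; simp only [Matrix.mul_assoc]
    _ = bᵀ * Jmat g * b := by rw [ha]
    _ = Jmat g := hb

lemma symp_inv (a b : Matrix (Fin g ⊕ Fin g) (Fin g ⊕ Fin g) ℤ)
    (hab : a * b = 1) (ha : IsSymplecticInt g a) : IsSymplecticInt g b := by
  unfold IsSymplecticInt at *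
  calc bᵀ * Jmat g * b
      = bᵀ * (aᵀ * Jmat g * a) * b := by rw [ha]
    _ = (a * b)ᵀ * Jmat g * (a * b) := by
        rw [transpose_mul]; simp only [Matrix.mul_assoc]
    _ = Jmat g := by rw [hab, transpose_one, Matrix.one_mul, Matrix.mul_one]

/-- The theta subgroup. -/
def thetaGroup (g : ℕ) : Subgroup (Matrix (Fin g ⊕ Fin g) (Fin g ⊕ Fin g) ℤ)ˣ where
  carrier := {M | IsSymplecticInt g (M : Matrix (Fin g ⊕ Fin g) (Fin g ⊕ Fin g) ℤ) ∧
    ∀ v, qf g (red (M : Matrix (Fin g ⊕ Fin g) (Fin g ⊕ Fin g) ℤ) *ᵥ v) = qf g v}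
  one_mem' := by
    refine ⟨?_, ?_⟩ <;> simp only [Set.mem_setOf_eq, Units.val_one]
    · exact symp_one
    · intro v
      rw [red_one, one_mulVec]
  mul_mem' := by
    rintro a b ⟨ha1, ha2⟩ ⟨hb1, hb2⟩
    refine ⟨?_, ?_⟩ <;> simp only [Set.mem_setOf_eq, Units.val_mul]
    · exact symp_mul _ _ ha1 hb1
    · intro v
      rw [red_mul, ← mulVec_mulVec, ha2, hb2]
  inv_mem' := by
    rintro a ⟨ha1, ha2⟩
    have h1 := a.mul_inv
    refine ⟨symp_inv _ _ h1 ha1, ?_⟩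
    intro v
    have hv := ha2 (red (((a⁻¹ : (Matrix (Fin g ⊕ Fin g) (Fin g ⊕ Fin g) ℤ)ˣ)) : Matrix (Fin g ⊕ Fin g) (Fin g ⊕ Fin g) ℤ) *ᵥ v)
    rw [mulVec_mulVec, ← red_mul, h1, red_one, one_mulVec] at hv
    exact hv.symm

end SpqAux


/-- For `g ≥ 1`, the set of symplectic `2g×2g` integer matrices `(A B; C D)` such
that all diagonal entries of `CᵀA` and of `DᵀB` are even forms a subgroup of
`Sp_{2g}(ℤ)` (realized inside the group of invertible `2g×2g` integer matrices). -/
theorem spq_subgroup (g : ℕ) (hg : 1 ≤ g) :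
    ∃ H : Subgroup (Matrix (Fin g ⊕ Fin g) (Fin g ⊕ Fin g) ℤ)ˣ,
      ∀ M : (Matrix (Fin g ⊕ Fin g) (Fin g ⊕ Fin g) ℤ)ˣ,
        M ∈ H ↔ (IsSymplecticInt g (M : Matrix (Fin g ⊕ Fin g) (Fin g ⊕ Fin g) ℤ) ∧
          EvenDiagCond g (M : Matrix (Fin g ⊕ Fin g) (Fin g ⊕ Fin g) ℤ)) := by
  refine ⟨SpqAux.thetaGroup g, fun M => ⟨fun hM => ?_, fun hM => ?_⟩⟩
  · obtain ⟨h1, h2⟩ := hM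
    exact ⟨h1, (SpqAux.cond_iff _ h1).mpr h2⟩
  · obtain ⟨h1, h2⟩ := hM
    exact ⟨h1, (SpqAux.cond_iff _ h1).mp h2⟩
end

section
/- In the polynomial ring ℚ[x], if an ideal I is generated by a subset of the ℚ-linear span of x², then I = 0 or I = (x²). Consequently, for n ≥ 2, the quotient ℚ[x]/(x^{n+1}) is not isomorphic, as a ℚ-algebra, to any quotient ℚ[x]/I with I generated by elements of the span of x². -/
open Polynomial

lemma finrank_quot_pow (k : ℕ) (_hk : 0 < k) :
    Module.finrank ℚ (ℚ[X] ⧸ Ideal.span {(X : ℚ[X]) ^ k}) = k := by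
  have hf : (X : ℚ[X]) ^ k ≠ 0 := pow_ne_zero _ X_ne_zero
  have := (AdjoinRoot.powerBasis hf).finrank
  rw [AdjoinRoot.powerBasis_dim, natDegree_X_pow] at this
  exact this

/-- In `ℚ[x]`, if an ideal is generated by a subset of the `ℚ`-linear span of `x²`,
then it is `0` or `(x²)`.  Consequently, for `n ≥ 2`, the quotient `ℚ[x]/(x^{n+1})`
is not isomorphic as a `ℚ`-algebra to any quotient `ℚ[x]/I` with `I` generated by
elements of the span of `x²`; i.e. the cohomology ring of `ℂPⁿ` admits no quadratic
presentation on one generator. -/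
theorem quadratic_ideal_classification :
    (∀ S : Set ℚ[X], S ⊆ (Submodule.span ℚ {(X : ℚ[X]) ^ 2} : Submodule ℚ ℚ[X]) →
      Ideal.span S = ⊥ ∨ Ideal.span S = Ideal.span {(X : ℚ[X]) ^ 2}) ∧
    (∀ n : ℕ, 2 ≤ n → ∀ S : Set ℚ[X],
      S ⊆ (Submodule.span ℚ {(X : ℚ[X]) ^ 2} : Submodule ℚ ℚ[X]) →
      IsEmpty ((ℚ[X] ⧸ Ideal.span {(X : ℚ[X]) ^ (n + 1)}) ≃ₐ[ℚ] (ℚ[X] ⧸ Ideal.span S))) := by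
  have key : ∀ S : Set ℚ[X], S ⊆ (Submodule.span ℚ {(X : ℚ[X]) ^ 2} : Submodule ℚ ℚ[X]) →
      Ideal.span S = ⊥ ∨ Ideal.span S = Ideal.span {(X : ℚ[X]) ^ 2} := by
    intro S hS
    by_cases h : ∀ s ∈ S, s = 0
    · left
      exact Ideal.span_eq_bot.2 h
    · right
      push_neg at h
      obtain ⟨s, hsS, hs0⟩ := h
      obtain ⟨c, hc⟩ := Submodule.mem_span_singleton.1 (hS hsS)
      apply le_antisymm
      · rw [Ideal.span_le]
        intro t htS
        obtain ⟨d, hd⟩ := Submodule.mem_span_singleton.1 (hS htS)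
        rw [SetLike.mem_coe, Ideal.mem_span_singleton]
        exact ⟨C d, by rw [← hd, smul_eq_C_mul, mul_comm]⟩
      · rw [Ideal.span_le, Set.singleton_subset_iff]
        have hcne : c ≠ 0 := by rintro rfl; simp at hc; exact hs0 hc.symm
        have : (X : ℚ[X]) ^ 2 = C c⁻¹ * s := by
          rw [← hc, smul_eq_C_mul, ← mul_assoc, ← C_mul, inv_mul_cancel₀ hcne, C_1, one_mul]
        rw [SetLike.mem_coe, this]
        exact Ideal.mul_mem_left _ _ (Ideal.subset_span hsS)
  refine ⟨key, ?_⟩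
  intro n hn S hS
  constructor
  intro e
  have hXmem : (X : ℚ[X]) ∉ Ideal.span {(X : ℚ[X]) ^ (n + 1)} := by
    rw [Ideal.mem_span_singleton]
    intro hdvd
    have := natDegree_le_of_dvd hdvd X_ne_zero
    simp [natDegree_X_pow] at this
    omega
  rcases key S hS with h | h
  · -- quotient by ⊥ is a domain (reduced); X is a nonzero nilpotent upstairs
    rw [h] at e
    haveI : (⊥ : Ideal ℚ[X]).IsPrime := Ideal.bot_prime
    have hx : IsNilpotent (Ideal.Quotient.mk (Ideal.span {(X : ℚ[X]) ^ (n + 1)}) X) := by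
      refine ⟨n + 1, ?_⟩
      rw [← map_pow, Ideal.Quotient.eq_zero_iff_mem]
      exact Ideal.subset_span rfl
    have hy : IsNilpotent (e (Ideal.Quotient.mk _ X)) := hx.map e
    have := hy.eq_zero
    rw [map_eq_zero_iff e e.injective, Ideal.Quotient.eq_zero_iff_mem] at this
    exact hXmem this
  · rw [h] at e
    have h1 := finrank_quot_pow (n + 1) (by omega)
    have h2 := finrank_quot_pow 2 (by omega)
    have := e.toLinearEquiv.finrank_eq
    rw [h1, h2] at this
    omega
end
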